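/- If a complete first-order theory T has the order property, then for every infinite cardinal λ ≥ |T| there is a set A of cardinality λ with strictly more than λ many complete 1-types over A; in particular T is not λ-stable for any λ ≥ |T|. -/

import Mathlib

open FirstOrder Cardinal

universe u v

variable {L : FirstOrder.Language.{u, u}} {M : Type u} [L.Structure M]

/-- Two tuples have the same type over a parameter set `A` (in the ambient structure `M`,
thought of as a monster model): they satisfy the same formulas with parameters from `A`. -/
def SameTypeOver (L : FirstOrder.Language.{u, u}) {M : Type u} [L.Structure M] (A : Set M) {α : Type v} (a b : α → M) : Prop :=
  ∀ (n : ℕ) (φ : L.Formula (α ⊕ Fin n)) (c : Fin n → M), (∀ i, c i ∈ A) →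
    (φ.Realize (Sum.elim a c) ↔ φ.Realize (Sum.elim b c))

/-- `a ⫝_N B` : the type `tp(a / N ∪ B)` is finitely satisfiable in `N`: every formula with
parameters from `N ∪ B` satisfied by `a` is satisfied by a tuple from `N`. -/
def FinSatIndep (L : FirstOrder.Language.{u, u}) {M : Type u} [L.Structure M] (N : Set M) {α : Type v} (a : α → M) (B : Set M) : Prop :=
  ∀ (n : ℕ) (φ : L.Formula (α ⊕ Fin n)) (c : Fin n → M), (∀ i, c i ∈ N ∪ B) →
    φ.Realize (Sum.elim a c) →
      ∃ a' : α → M, (∀ i, a' i ∈ N) ∧ φ.Realize (Sum.elim a' c)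

/-- The structure `M` has the order property: some formula orders an infinite sequence
of finite tuples. -/
def HasOrderProp (L : FirstOrder.Language.{u, u}) (M : Type u) [L.Structure M] : Prop :=
  ∃ (k : ℕ) (φ : L.Formula (Fin k ⊕ Fin k)) (a : ℕ → Fin k → M),
    ∀ i j : ℕ, φ.Realize (Sum.elim (a i) (a j)) ↔ i < j

/-- An abstract complete type over `B ⊆ M` in variables `α`, represented as a set of
formula/parameter pairs: parameters come from `B`, every finite subset is realized in `M`
(equivalently, the type is consistent with the elementary diagram of `M`), and the set is
complete (contains each formula over `B` or its negation). -/
def IsCompleteTypeOn (α : Type v) (B : Set M)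
    (p : Set (Σ n : ℕ, L.Formula (α ⊕ Fin n) × (Fin n → M))) : Prop :=
  (∀ q ∈ p, ∀ i, q.2.2 i ∈ B) ∧
  (∀ s : Finset (Σ n : ℕ, L.Formula (α ⊕ Fin n) × (Fin n → M)), ↑s ⊆ p →
    ∃ a : α → M, ∀ q ∈ s, q.2.1.Realize (Sum.elim a q.2.2)) ∧
  (∀ (n : ℕ) (φ : L.Formula (α ⊕ Fin n)) (c : Fin n → M), (∀ i, c i ∈ B) →
    (⟨n, (φ, c)⟩ ∈ p ∨ ⟨n, (φ.not, c)⟩ ∈ p))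

open FirstOrder.Language

variable {N : Type u} [L.Structure N]

/-- concatenation of two parameter tuples -/
def joinF {β : Type*} {n₁ n₂ : ℕ} (e₁ : Fin n₁ → β) (e₂ : Fin n₂ → β) : Fin (n₁ + n₂) → β :=
  fun i => if h : (i : ℕ) < n₁ then e₁ ⟨i, h⟩ else e₂ ⟨(i : ℕ) - n₁, by omega⟩

theorem joinF_castAdd {β : Type*} {n₁ n₂ : ℕ} (e₁ : Fin n₁ → β) (e₂ : Fin n₂ → β) (j : Fin n₁) :
    joinF e₁ e₂ (Fin.castAdd n₂ j) = e₁ j := by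
  simp only [joinF, Fin.coe_castAdd, j.isLt, dif_pos]

theorem joinF_natAdd {β : Type*} {n₁ n₂ : ℕ} (e₁ : Fin n₁ → β) (e₂ : Fin n₂ → β) (j : Fin n₂) :
    joinF e₁ e₂ (Fin.natAdd n₁ j) = e₂ j := by
  have h : ¬ ((Fin.natAdd n₁ j : ℕ) < n₁) := by simp [Fin.natAdd]
  simp only [joinF, dif_neg h]
  congr 1
  ext
  simp [Fin.natAdd]

theorem joinF_mem {β : Type*} {n₁ n₂ : ℕ} {e₁ : Fin n₁ → β} {e₂ : Fin n₂ → β} {A : Set β}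
    (h₁ : ∀ i, e₁ i ∈ A) (h₂ : ∀ i, e₂ i ∈ A) : ∀ i, joinF e₁ e₂ i ∈ A := by
  intro i
  unfold joinF
  split <;> [exact h₁ _; exact h₂ _]


theorem realize0_congr {α : Type*} (χ : L.BoundedFormula α 0) {w w' : α → N} (h : w = w')
    (xs xs' : Fin 0 → N) : χ.Realize w xs ↔ χ.Realize w' xs' := by
  subst h; rw [Subsingleton.elim xs xs']

/-- evaluation map for a formula in variables `(Unit ⊕ Fin m) ⊕ Fin n` -/
def evA {m n : ℕ} (y : N) (c : Fin m → N) (e : Fin n → N) : (Unit ⊕ Fin m) ⊕ Fin n → N :=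
  Sum.elim (Sum.elim (fun _ => y) c) e

/-- bind the `Unit` variable as a new bound variable -/
def bindUnit {m n : ℕ} (χ : L.Formula ((Unit ⊕ Fin m) ⊕ Fin n)) :
    L.BoundedFormula (Fin m ⊕ Fin n) 1 :=
  BoundedFormula.relabel (fun p => match p with
    | Sum.inl (Sum.inl _) => Sum.inr (0 : Fin 1)
    | Sum.inl (Sum.inr j) => Sum.inl (Sum.inl j)
    | Sum.inr i => Sum.inl (Sum.inr i)) χ

theorem realize_bindUnit {m n : ℕ} {χ : L.Formula ((Unit ⊕ Fin m) ⊕ Fin n)}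
    {v : Fin m ⊕ Fin n → N} {xs : Fin 1 → N} :
    (bindUnit χ).Realize v xs ↔ χ.Realize (evA (xs 0) (v ∘ Sum.inl) (v ∘ Sum.inr)) := by
  rw [bindUnit, BoundedFormula.realize_relabel]
  exact realize0_congr χ (by funext p; rcases p with (⟨⟩|j)|i <;> rfl) _ _

/-- existentially quantify the `Unit` variable -/
def exUnit {m n : ℕ} (χ : L.Formula ((Unit ⊕ Fin m) ⊕ Fin n)) : L.Formula (Fin m ⊕ Fin n) :=
  (bindUnit χ).ex

theorem realize_exUnit {m n : ℕ} {χ : L.Formula ((Unit ⊕ Fin m) ⊕ Fin n)}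
    {c : Fin m → N} {e : Fin n → N} :
    (exUnit χ).Realize (Sum.elim c e) ↔ ∃ y : N, χ.Realize (evA y c e) := by
  rw [exUnit]
  show (bindUnit χ).ex.Realize (Sum.elim c e) default ↔ _
  rw [BoundedFormula.realize_ex]
  refine exists_congr fun y => ?_
  rw [realize_bindUnit]
  exact realize0_congr χ (by
    funext p; rcases p with (⟨⟩|j)|i <;> simp [evA, Fin.snoc]) _ _

/-- universally quantified pointwise equivalence of two formulas in the `Unit` variable -/
def allIff {m n : ℕ} (χ₁ χ₂ : L.Formula ((Unit ⊕ Fin m) ⊕ Fin n)) : L.Formula (Fin m ⊕ Fin n) :=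
  ((bindUnit χ₁).iff (bindUnit χ₂)).all

theorem realize_allIff {m n : ℕ} {χ₁ χ₂ : L.Formula ((Unit ⊕ Fin m) ⊕ Fin n)}
    {c : Fin m → N} {e : Fin n → N} :
    (allIff χ₁ χ₂).Realize (Sum.elim c e) ↔
      ∀ y : N, (χ₁.Realize (evA y c e) ↔ χ₂.Realize (evA y c e)) := by
  rw [allIff]
  show ((bindUnit χ₁).iff (bindUnit χ₂)).all.Realize (Sum.elim c e) default ↔ _
  rw [BoundedFormula.realize_all]
  refine forall_congr' fun y => ?_
  rw [BoundedFormula.realize_iff, realize_bindUnit, realize_bindUnit]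
  have h0 : (Fin.snoc (default : Fin 0 → N) y : Fin 1 → N) 0 = y := by
    simp [Fin.snoc]
  rw [h0]
  have he : ∀ ψ : L.Formula ((Unit ⊕ Fin m) ⊕ Fin n),
      ψ.Realize (evA y ((Sum.elim c e) ∘ Sum.inl) ((Sum.elim c e) ∘ Sum.inr)) ↔
        ψ.Realize (evA y c e) := fun ψ =>
    realize0_congr ψ (by funext p; rcases p with (⟨⟩|j)|i <;> rfl) _ _
  rw [he, he]

/-- pad parameters on the left -/
def padL {m n₁ : ℕ} (n₂ : ℕ) (χ : L.Formula ((Unit ⊕ Fin m) ⊕ Fin n₁)) :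
    L.Formula ((Unit ⊕ Fin m) ⊕ Fin (n₁ + n₂)) :=
  Formula.relabel (Sum.map id (Fin.castAdd n₂)) χ

def padR {m n₂ : ℕ} (n₁ : ℕ) (χ : L.Formula ((Unit ⊕ Fin m) ⊕ Fin n₂)) :
    L.Formula ((Unit ⊕ Fin m) ⊕ Fin (n₁ + n₂)) :=
  Formula.relabel (Sum.map id (Fin.natAdd n₁)) χ

theorem realize_padL {m n₁ n₂ : ℕ} {χ : L.Formula ((Unit ⊕ Fin m) ⊕ Fin n₁)}
    {y : N} {c : Fin m → N} {e₁ : Fin n₁ → N} {e₂ : Fin n₂ → N} :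
    (padL n₂ χ).Realize (evA y c (joinF e₁ e₂)) ↔ χ.Realize (evA y c e₁) := by
  rw [padL, Formula.realize_relabel]
  have : (evA y c (joinF e₁ e₂) : _ → N) ∘ Sum.map id (Fin.castAdd n₂) = evA y c e₁ := by
    funext p; rcases p with q|i
    · rfl
    · show joinF e₁ e₂ (Fin.castAdd n₂ i) = e₁ i
      exact joinF_castAdd e₁ e₂ i
  rw [this]

theorem realize_padR {m n₁ n₂ : ℕ} {χ : L.Formula ((Unit ⊕ Fin m) ⊕ Fin n₂)}
    {y : N} {c : Fin m → N} {e₁ : Fin n₁ → N} {e₂ : Fin n₂ → N} :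
    (padR n₁ χ).Realize (evA y c (joinF e₁ e₂)) ↔ χ.Realize (evA y c e₂) := by
  rw [padR, Formula.realize_relabel]
  have : (evA y c (joinF e₁ e₂) : _ → N) ∘ Sum.map id (Fin.natAdd n₁) = evA y c e₂ := by
    funext p; rcases p with q|i
    · rfl
    · show joinF e₁ e₂ (Fin.natAdd n₁ i) = e₂ i
      exact joinF_natAdd e₁ e₂ i
  rw [this]

variable (L)

/-- the complete type of a tuple over a parameter set -/
def tpOf {β : Type v} (A : Set N) (b : β → N) :
    Set (Σ n : ℕ, L.Formula (β ⊕ Fin n) × (Fin n → N)) :=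
  {Q | (∀ i, Q.2.2 i ∈ A) ∧ Q.2.1.Realize (Sum.elim b Q.2.2)}

variable {L}

theorem isCompleteTypeOn_tpOf {β : Type v} (A : Set N) (b : β → N) :
    IsCompleteTypeOn β A (tpOf L A b) := by
  refine ⟨fun q hq => hq.1, fun s hs => ⟨b, fun q hq => (hs hq).2⟩, fun n φ c hc => ?_⟩
  by_cases h : φ.Realize (Sum.elim b c)
  · exact Or.inl ⟨hc, h⟩
  · exact Or.inr ⟨hc, by rwa [Formula.realize_not]⟩

theorem mem_tpOf {β : Type v} {A : Set N} {b : β → N} {n : ℕ}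
    {φ : L.Formula (β ⊕ Fin n)} {c : Fin n → N} :
    (⟨n, (φ, c)⟩ : Σ n : ℕ, L.Formula (β ⊕ Fin n) × (Fin n → N)) ∈ tpOf L A b ↔
      (∀ i, c i ∈ A) ∧ φ.Realize (Sum.elim b c) := Iff.rfl


theorem count {lam : Cardinal.{u}} (hlam : ℵ₀ ≤ lam)
    {A : Set N} (hA : #A = lam) {k : ℕ} (hk : 0 < k) {X : Type u} (t : X → Fin k → N)
    (htypes : lam < #(Set.range (fun η => tpOf L A (t η)))) :
    ∃ A' : Set N, #A' = lam ∧
      lam < #{p : Set (Σ n : ℕ, L.Formula (Unit ⊕ Fin n) × (Fin n → N)) //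
        IsCompleteTypeOn Unit A' p} := by
  classical
  set emb : ∀ m : ℕ, Fin m → Fin k := fun m i => if h : (i : ℕ) < k then ⟨i, h⟩ else ⟨0, hk⟩
    with hembdef
  have emb_val : ∀ {m' m'' : ℕ} (i : Fin m') (j : Fin m''), (i : ℕ) = (j : ℕ) →
      emb m' i = emb m'' j := by
    intro m' m'' i j hij
    simp only [hembdef, hij]
  set T : (m : ℕ) → X → Set (Σ n : ℕ, L.Formula (Fin m ⊕ Fin n) × (Fin n → N)) :=
    fun m η => tpOf L A (t η ∘ emb m) with hTdef
  set S : ℕ → Cardinal.{u} := fun m => #(Set.range (T m)) with hSdef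
  have hSk : lam < S k := by
    have harg : ∀ η : X, (t η ∘ emb k) = t η := by
      intro η
      funext i
      show t η (emb k i) = t η i
      congr 1
      simp [hembdef, i.isLt]
    have he : T k = fun η => tpOf L A (t η) := by
      funext η
      show tpOf L A (t η ∘ emb k) = tpOf L A (t η)
      rw [harg]
    rw [hSdef]
    simp only [he]
    exact htypes
  have hS0 : ¬ lam < S 0 := by
    have hsub : Set.Subsingleton (Set.range (T 0)) := by
      rintro _ ⟨η, rfl⟩ _ ⟨η', rfl⟩
      have h0 : (t η ∘ emb 0) = (t η' ∘ emb 0) := funext fun i => i.elim0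
      simp only [hTdef, h0]
    have h1 : S 0 ≤ 1 := mk_le_one_iff_set_subsingleton.mpr hsub
    exact not_lt.2 (h1.trans (le_trans (le_of_lt one_lt_aleph0) hlam))
  have hfind : ∀ j : ℕ, lam < S j → j ≤ k → ∃ m, m + 1 ≤ k ∧ S m ≤ lam ∧ lam < S (m + 1) := by
    intro j
    induction j with
    | zero => intro h0 _; exact absurd h0 hS0
    | succ j ih =>
      intro hj hjk
      by_cases h : lam < S j
      · exact ih h (by omega)
      · exact ⟨j, hjk, not_lt.1 h, hj⟩
  obtain ⟨m, hm1k, hSm, hSm1⟩ := hfind k hSk le_rfl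
  -- representatives of m-types
  have hrex : ∀ q : Set.range (T m), ∃ η, T m η = (q : Set _) := fun q => q.2
  choose g hg using hrex
  set rep : X → X := fun η => g ⟨T m η, Set.mem_range_self η⟩ with hrepdef
  have hrep : ∀ η, T m (rep η) = T m η := fun η => hg _
  have hrepeq : ∀ η η', T m η = T m η' → rep η = rep η' := by
    intro η η' h
    simp only [hrepdef]
    congr 1
    exact Subtype.ext h
  set cb : X → (Fin m → N) := fun η => t (rep η) ∘ emb m with hcbdef
  set tm : X → (Fin m → N) := fun η => t η ∘ emb m with htmdef
  set tl : X → N := fun η => t η (emb (m + 1) (Fin.last m)) with htldef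
  -- the transported 1-type
  set r : X → Set (Σ n : ℕ, L.Formula (Unit ⊕ Fin n) × (Fin n → N)) := fun η =>
    {Q | (∀ i, Q.2.2 i ∈ A ∪ Set.range (cb η)) ∧
      ∃ (n' : ℕ) (χ : L.Formula ((Unit ⊕ Fin m) ⊕ Fin n')) (e : Fin n' → N),
        (∀ i, e i ∈ A) ∧
        (∀ y : N, Q.2.1.Realize (Sum.elim (fun _ => y) Q.2.2) ↔ χ.Realize (evA y (cb η) e)) ∧
        χ.Realize (evA (tl η) (tm η) e)} with hrdef
  -- presentations agree (well-definedness)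
  have agree : ∀ (η : X) {n₁ n₂ : ℕ} (χ₁ : L.Formula ((Unit ⊕ Fin m) ⊕ Fin n₁))
      (χ₂ : L.Formula ((Unit ⊕ Fin m) ⊕ Fin n₂)) (e₁ : Fin n₁ → N) (e₂ : Fin n₂ → N),
      (∀ i, e₁ i ∈ A) → (∀ i, e₂ i ∈ A) →
      (∀ y : N, (χ₁.Realize (evA y (cb η) e₁) ↔ χ₂.Realize (evA y (cb η) e₂))) →
      (χ₁.Realize (evA (tl η) (tm η) e₁) ↔ χ₂.Realize (evA (tl η) (tm η) e₂)) := by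
    intro η n₁ n₂ χ₁ χ₂ e₁ e₂ he₁ he₂ heq
    have hmem : (⟨n₁ + n₂, (allIff (padL n₂ χ₁) (padR n₁ χ₂), joinF e₁ e₂)⟩ :
        Σ n : ℕ, L.Formula (Fin m ⊕ Fin n) × (Fin n → N)) ∈ T m (rep η) := by
      refine ⟨joinF_mem he₁ he₂, ?_⟩
      show (allIff (padL n₂ χ₁) (padR n₁ χ₂)).Realize (Sum.elim (cb η) (joinF e₁ e₂))
      rw [realize_allIff]
      intro y
      rw [realize_padL, realize_padR]
      exact heq y
    rw [hrep] at hmem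
    have h2 := hmem.2
    rw [show (Sum.elim (t η ∘ emb m) (joinF e₁ e₂)) = Sum.elim (tm η) (joinF e₁ e₂) from rfl] at h2
    rw [realize_allIff] at h2
    have h3 := h2 (tl η)
    rwa [realize_padL, realize_padR] at h3
  -- a point of A
  have hA0 : A.Nonempty := by
    rw [Set.nonempty_coe_sort.symm, ← Cardinal.mk_ne_zero_iff, hA]
    exact ne_of_gt (lt_of_lt_of_le aleph0_pos hlam)
  obtain ⟨a₀, ha₀⟩ := hA0
  -- presentation existence
  have pres : ∀ (η : X) {n : ℕ} (ψ : L.Formula (Unit ⊕ Fin n)) (d : Fin n → N),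
      (∀ i, d i ∈ A ∪ Set.range (cb η)) →
      ∃ (χ : L.Formula ((Unit ⊕ Fin m) ⊕ Fin n)) (e : Fin n → N), (∀ i, e i ∈ A) ∧
        (∀ y : N, ψ.Realize (Sum.elim (fun _ => y) d) ↔ χ.Realize (evA y (cb η) e)) := by
    intro η n ψ d hd
    refine ⟨Formula.relabel (Sum.elim (fun _ => Sum.inl (Sum.inl ()))
      (fun i => if h : d i ∈ A then Sum.inr i
        else Sum.inl (Sum.inr ((hd i).resolve_left h).choose))) ψ,
      fun i => if d i ∈ A then d i else a₀, ?_, ?_⟩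
    · intro i
      show (if d i ∈ A then d i else a₀) ∈ A
      split_ifs with h
      · exact h
      · exact ha₀
    · intro y
      rw [Formula.realize_relabel]
      apply iff_of_eq
      congr 1
      funext p
      rcases p with ⟨⟩|i
      · rfl
      · show d i = (evA y (cb η) (fun i => if d i ∈ A then d i else a₀))
          (if h : d i ∈ A then Sum.inr i
            else Sum.inl (Sum.inr ((hd i).resolve_left h).choose))
        by_cases h : d i ∈ A
        · rw [dif_pos h]
          show d i = if d i ∈ A then d i else a₀
          rw [if_pos h]
        · rw [dif_neg h]
          exact (((hd i).resolve_left h).choose_spec).symm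
  -- bridging (m+1)-formulas to transported 1-type elements
  set rho0 : (n : ℕ) → Fin (m + 1) ⊕ Fin n → (Unit ⊕ Fin m) ⊕ Fin n := fun n p =>
    Sum.elim (fun (v : Fin (m + 1)) =>
        if h : (v : ℕ) < m then Sum.inl (Sum.inr (⟨(v : ℕ), h⟩ : Fin m))
        else Sum.inl (Sum.inl ()))
      (fun i => Sum.inr i) p with hrho0def
  set chi : (n : ℕ) → L.Formula (Fin (m + 1) ⊕ Fin n) → L.Formula ((Unit ⊕ Fin m) ⊕ Fin n) :=
    fun n χ₀ => Formula.relabel (rho0 n) χ₀ with hchidef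
  set psi : (n : ℕ) → L.Formula (Fin (m + 1) ⊕ Fin n) → L.Formula (Unit ⊕ Fin (m + n)) :=
    fun n χ₀ => Formula.relabel (Sum.elim (Sum.elim (fun _ => Sum.inl ())
      (fun j => Sum.inr (Fin.castAdd n j))) (fun i => Sum.inr (Fin.natAdd m i)))
      (chi n χ₀) with hpsidef
  -- (chi, e) is a presentation of (psi, joinF c e)
  have chi_pres : ∀ (c : Fin m → N) {n : ℕ} (χ₀ : L.Formula (Fin (m + 1) ⊕ Fin n))
      (e : Fin n → N) (y : N),
      (psi n χ₀).Realize (Sum.elim (fun _ => y) (joinF c e)) ↔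
        (chi n χ₀).Realize (evA y c e) := by
    intro c n χ₀ e y
    rw [hpsidef]
    rw [Formula.realize_relabel]
    apply iff_of_eq
    congr 1
    funext p
    rcases p with (⟨⟩|j)|i
    · rfl
    · show joinF c e (Fin.castAdd n j) = (evA y c e) (Sum.inl (Sum.inr j))
      rw [joinF_castAdd]
      rfl
    · show joinF c e (Fin.natAdd m i) = (evA y c e) (Sum.inr i)
      rw [joinF_natAdd]
      rfl
  -- realization of chi at the (m+1)-tuple side
  have chi_real : ∀ (η : X) {n : ℕ} (χ₀ : L.Formula (Fin (m + 1) ⊕ Fin n)) (e : Fin n → N),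
      ((chi n χ₀).Realize (evA (tl η) (tm η) e) ↔
        χ₀.Realize (Sum.elim (t η ∘ emb (m + 1)) e)) := by
    intro η n χ₀ e
    rw [hchidef]
    rw [Formula.realize_relabel]
    apply iff_of_eq
    congr 1
    funext p
    rcases p with v|i
    · show (evA (tl η) (tm η) e) (rho0 n (Sum.inl v)) = t η (emb (m + 1) v)
      by_cases h : (v : ℕ) < m
      · have hv : rho0 n (Sum.inl v) = Sum.inl (Sum.inr (⟨(v : ℕ), h⟩ : Fin m)) := by
          simp only [hrho0def, Sum.elim_inl]
          exact dif_pos h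
        rw [hv]
        show tm η ⟨(v : ℕ), h⟩ = t η (emb (m + 1) v)
        show t η (emb m ⟨(v : ℕ), h⟩) = t η (emb (m + 1) v)
        rw [emb_val (⟨(v : ℕ), h⟩ : Fin m) v rfl]
      · have hv : rho0 n (Sum.inl v) = Sum.inl (Sum.inl ()) := by
          simp only [hrho0def, Sum.elim_inl]
          exact dif_neg h
        rw [hv]
        show tl η = t η (emb (m + 1) v)
        rw [htldef]
        show t η (emb (m + 1) (Fin.last m)) = t η (emb (m + 1) v)
        congr 1
        apply emb_val
        show m = (v : ℕ)
        have := v.isLt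
        omega
    · rfl
  have bridge : ∀ (η : X) {n : ℕ} (χ₀ : L.Formula (Fin (m + 1) ⊕ Fin n)) (c : Fin n → N),
      (∀ i, c i ∈ A) →
      ((⟨n, (χ₀, c)⟩ : Σ n : ℕ, L.Formula (Fin (m + 1) ⊕ Fin n) × (Fin n → N)) ∈ T (m + 1) η ↔
        (⟨m + n, (psi n χ₀, joinF (cb η) c)⟩ :
          Σ n : ℕ, L.Formula (Unit ⊕ Fin n) × (Fin n → N)) ∈ r η) := by
    intro η n χ₀ c hc
    constructor
    · rintro ⟨-, hreal⟩
      refine ⟨joinF_mem (fun j => Or.inr (Set.mem_range_self j)) (fun i => Or.inl (hc i)),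
        n, chi n χ₀, c, hc, fun y => chi_pres (cb η) χ₀ c y, ?_⟩
      rw [chi_real η χ₀ c]
      exact hreal
    · rintro ⟨-, n', χ', e', he', heq', hre'⟩
      refine ⟨hc, ?_⟩
      have hagree := agree η (chi n χ₀) χ' c e' hc he' (fun y => by
        rw [← chi_pres (cb η) χ₀ c y, heq' y])
      rw [← chi_real η χ₀ c]
      exact hagree.2 hre'
  -- T (m+1) is determined by (T m, r)
  have keydet : ∀ η η', T m η = T m η' → r η = r η' → T (m + 1) η = T (m + 1) η' := by
    intro η η' hTm hr
    have hcb : cb η = cb η' := by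
      rw [hcbdef]
      show t (rep η) ∘ emb m = t (rep η') ∘ emb m
      rw [hrepeq η η' hTm]
    ext Q
    obtain ⟨n, χ₀, c⟩ := Q
    constructor
    · intro h
      have hc : ∀ i, c i ∈ A := h.1
      rw [bridge η χ₀ c hc] at h
      rw [bridge η' χ₀ c hc, ← hcb, ← hr]
      exact h
    · intro h
      have hc : ∀ i, c i ∈ A := h.1
      rw [bridge η' χ₀ c hc] at h
      rw [bridge η χ₀ c hc, hcb, hr]
      exact h
  -- r η is a complete type over A ∪ range (cb η)
  have rIsType : ∀ η : X, IsCompleteTypeOn Unit (A ∪ Set.range (cb η)) (r η) := by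
    intro η
    refine ⟨fun Q hQ => hQ.1, ?_, ?_⟩
    · -- finite satisfiability
      have conj : ∀ s : Finset (Σ n : ℕ, L.Formula (Unit ⊕ Fin n) × (Fin n → N)), ↑s ⊆ r η →
          ∃ (nc : ℕ) (χc : L.Formula ((Unit ⊕ Fin m) ⊕ Fin nc)) (ec : Fin nc → N),
            (∀ i, ec i ∈ A) ∧
            (∀ y : N, χc.Realize (evA y (cb η) ec) →
              ∀ Q ∈ s, Q.2.1.Realize (Sum.elim (fun _ => y) Q.2.2)) ∧
            χc.Realize (evA (tl η) (tm η) ec) := by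
        intro s
        induction s using Finset.induction_on with
        | empty =>
          intro _
          refine ⟨0, ⊤, fun i => i.elim0, fun i => i.elim0, fun y _ Q hQ => absurd hQ (by simp), ?_⟩
          exact BoundedFormula.realize_top.2 trivial
        | @insert Q s hQns ih =>
          intro hsub
          have hQ : Q ∈ r η := hsub (Finset.mem_insert_self Q s)
          obtain ⟨hQp, n₁, χ₁, e₁, he₁, heq₁, hre₁⟩ := hQ
          obtain ⟨n₂, χ₂, e₂, he₂, himp₂, hre₂⟩ := ih (by
            intro x hx
            exact hsub (Finset.mem_insert_of_mem hx))
          refine ⟨n₁ + n₂, (padL n₂ χ₁) ⊓ (padR n₁ χ₂), joinF e₁ e₂, joinF_mem he₁ he₂, ?_, ?_⟩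
          · intro y hy Q' hQ'
            rw [Formula.realize_inf] at hy
            obtain ⟨h1, h2⟩ := hy
            rw [realize_padL] at h1
            rw [realize_padR] at h2
            rcases Finset.mem_insert.1 hQ' with rfl|hQ's
            · exact (heq₁ y).2 h1
            · exact himp₂ y h2 Q' hQ's
          · rw [Formula.realize_inf, realize_padL, realize_padR]
            exact ⟨hre₁, hre₂⟩
      intro s hs
      obtain ⟨nc, χc, ec, hec, himp, hre⟩ := conj s hs
      have hmem : (⟨nc, (exUnit χc, ec)⟩ :
          Σ n : ℕ, L.Formula (Fin m ⊕ Fin n) × (Fin n → N)) ∈ T m η := by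
        refine ⟨hec, ?_⟩
        show (exUnit χc).Realize (Sum.elim (tm η) ec)
        rw [realize_exUnit]
        exact ⟨tl η, hre⟩
      rw [← hrep] at hmem
      have h2 := hmem.2
      rw [show (Sum.elim (t (rep η) ∘ emb m) ec) = Sum.elim (cb η) ec from rfl] at h2
      rw [realize_exUnit] at h2
      obtain ⟨w, hw⟩ := h2
      exact ⟨fun _ => w, fun Q hQ => himp w hw Q hQ⟩
    · -- completeness
      intro n ψ d hd
      obtain ⟨χ, e, he, heq⟩ := pres η ψ d hd
      by_cases hreal : χ.Realize (evA (tl η) (tm η) e)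
      · exact Or.inl ⟨hd, n, χ, e, he, heq, hreal⟩
      · refine Or.inr ⟨hd, n, χ.not, e, he, ?_, ?_⟩
        · intro y
          rw [Formula.realize_not, Formula.realize_not, heq y]
        · rw [Formula.realize_not]
          exact hreal
  -- final counting
  by_contra hcon
  push_neg at hcon
  have hcon' : ∀ A' : Set N, #A' = lam →
      #{p : Set (Σ n : ℕ, L.Formula (Unit ⊕ Fin n) × (Fin n → N)) //
        IsCompleteTypeOn Unit A' p} ≤ lam := fun A' hA' => hcon A' hA'
  set B : Set.range (T m) → Set N := fun q => A ∪ Set.range (t (g q) ∘ emb m) with hBdef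
  have hBcard : ∀ q, #(B q) = lam := by
    intro q
    apply le_antisymm
    · refine le_trans (Cardinal.mk_union_le _ _) ?_
      have h1 : #(Set.range (t (g q) ∘ emb m)) ≤ lam :=
        le_of_lt (lt_of_lt_of_le (Set.finite_range _).lt_aleph0 hlam)
      rw [hA]
      refine le_trans (add_le_add le_rfl h1) ?_
      rw [Cardinal.add_eq_self hlam]
    · rw [← hA]
      exact Cardinal.mk_le_mk_of_subset Set.subset_union_left
  have hrex2 : ∀ s : Set.range (T (m + 1)), ∃ η, T (m + 1) η = (s : Set _) := fun s => s.2
  choose h2 hh2 using hrex2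
  have hBr : ∀ s : Set.range (T (m + 1)),
      B ⟨T m (h2 s), Set.mem_range_self _⟩ = A ∪ Set.range (cb (h2 s)) := fun s => rfl
  set F : Set.range (T (m + 1)) →
      Σ q : Set.range (T m), {p : Set (Σ n : ℕ, L.Formula (Unit ⊕ Fin n) × (Fin n → N)) //
        IsCompleteTypeOn Unit (B q) p} :=
    fun s => ⟨⟨T m (h2 s), Set.mem_range_self _⟩, ⟨r (h2 s), by
      rw [hBr s]
      exact rIsType (h2 s)⟩⟩ with hFdef
  have Finj : Function.Injective F := by
    intro s s' hF
    have hq : T m (h2 s) = T m (h2 s') := by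
      have := congrArg (fun z => (Sigma.fst z).1) hF
      exact this
    have hr2 : r (h2 s) = r (h2 s') := by
      have := congrArg (fun z : (Σ q : Set.range (T m),
        {p : Set (Σ n : ℕ, L.Formula (Unit ⊕ Fin n) × (Fin n → N)) //
          IsCompleteTypeOn Unit (B q) p}) => (z.2 : Set (Σ n : ℕ,
            L.Formula (Unit ⊕ Fin n) × (Fin n → N)))) hF
      exact this
    have := keydet (h2 s) (h2 s') hq hr2
    rw [hh2 s, hh2 s'] at this
    exact Subtype.ext this
  have hcard1 : S (m + 1) ≤ #(Σ q : Set.range (T m),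
      {p : Set (Σ n : ℕ, L.Formula (Unit ⊕ Fin n) × (Fin n → N)) //
        IsCompleteTypeOn Unit (B q) p}) := Cardinal.mk_le_of_injective Finj
  have hcard2 : #(Σ q : Set.range (T m),
      {p : Set (Σ n : ℕ, L.Formula (Unit ⊕ Fin n) × (Fin n → N)) //
        IsCompleteTypeOn Unit (B q) p}) ≤ lam := by
    rw [Cardinal.mk_sigma]
    calc (Cardinal.sum fun q => #{p : Set (Σ n : ℕ, L.Formula (Unit ⊕ Fin n) × (Fin n → N)) //
        IsCompleteTypeOn Unit (B q) p})
        ≤ Cardinal.sum (fun _ : Set.range (T m) => lam) :=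
          Cardinal.sum_le_sum _ _ (fun q => hcon' (B q) (hBcard q))
      _ = #(Set.range (T m)) * lam := by rw [Cardinal.sum_const']
      _ ≤ lam * lam := mul_le_mul' hSm le_rfl
      _ = lam := Cardinal.mul_eq_self hlam
  exact absurd (hSm1.trans_le (hcard1.trans hcard2)) (lt_irrefl lam)

theorem stretch {N0 : Type u} [L.Structure N0] (J : Type u) [LinearOrder J] [Nonempty N0] {k : ℕ}
    (φ : L.Formula (Fin k ⊕ Fin k)) (a : ℕ → Fin k → N0)
    (ha : ∀ i j : ℕ, φ.Realize (Sum.elim (a i) (a j)) ↔ i < j) :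
    ∃ (N : Type u) (_ : L.Structure N) (_ : Nonempty N),
      (∀ σ : L.Sentence, N0 ⊨ σ → N ⊨ σ) ∧
      ∃ b : J → Fin k → N, ∀ i j : J, φ.Realize (Sum.elim (b i) (b j)) ↔ i < j := by
  classical
  let U : Ultrafilter (Finset J) := Ultrafilter.of Filter.atTop
  have hU : ∀ s ∈ (Filter.atTop : Filter (Finset J)), s ∈ U := Ultrafilter.of_le Filter.atTop
  let N := (U : Filter (Finset J)).Product (fun _ => N0)
  let idx : Finset J → J → ℕ := fun s j =>
    if h : j ∈ s then ((s.orderIsoOfFin rfl).symm ⟨j, h⟩ : Fin s.card) else 0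
  have idx_lt : ∀ (s : Finset J) (i j : J), i ∈ s → j ∈ s → (idx s i < idx s j ↔ i < j) := by
    intro s i j hi hj
    simp only [idx, dif_pos hi, dif_pos hj]
    rw [← Fin.lt_iff_val_lt_val, OrderIso.lt_iff_lt]
    exact Iff.rfl
  let bf : J → Fin k → (∀ _ : Finset J, N0) := fun j v s => a (idx s j) v
  let b : J → Fin k → N := fun j v => (bf j v : ∀ _, N0)
  refine ⟨N, inferInstance, inferInstance, ?_, b, ?_⟩
  · intro σ hσ
    rw [Language.Ultraproduct.sentence_realize]
    exact Filter.Eventually.of_forall fun _ => hσ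
  · intro i j
    have key : φ.Realize (Sum.elim (b i) (b j)) ↔
        ∀ᶠ s : Finset J in U, φ.Realize (Sum.elim (a (idx s i)) (a (idx s j))) := by
      have h1 : (Sum.elim (b i) (b j) : Fin k ⊕ Fin k → N)
          = fun p => ((Sum.elim (bf i) (bf j) p : ∀ _, N0) : N) := by
        funext p; cases p <;> rfl
      rw [h1]
      refine (Language.Ultraproduct.realize_formula_cast (M := fun _ => N0)
        (u := U) φ (Sum.elim (bf i) (bf j))).trans ?_
      refine Filter.eventually_congr (Filter.Eventually.of_forall fun s => ?_)
      rw [iff_eq_eq]; congr 1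
      funext p; cases p <;> rfl
    have hmem : ∀ᶠ s : Finset J in U, i ∈ s ∧ j ∈ s := by
      have := hU _ (Filter.eventually_ge_atTop ({i, j} : Finset J))
      exact (Filter.Eventually.filter_mono le_rfl this).mono fun s hs =>
        ⟨hs (by simp), hs (by simp)⟩
    rw [key]
    constructor
    · intro h
      by_contra hij
      have : ∀ᶠ s : Finset J in U, False := by
        filter_upwards [h, hmem] with s hs hms
        rw [ha, idx_lt s i j hms.1 hms.2] at hs
        exact hij hs
      exact this.exists.choose_spec
    · intro hij
      filter_upwards [hmem] with s hms
      rw [ha, idx_lt s i j hms.1 hms.2]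
      exact hij

/-- If (the complete theory of) `M` has the order property, then for every infinite cardinal
`lam ≥ |T|` there is, in some model of the theory of `M`, a parameter set `A` of cardinality
`lam` with strictly more than `lam` many complete 1-types over `A`; in particular the theory
is not `lam`-stable. -/
theorem stmt11 (L : FirstOrder.Language.{u, u}) (M : Type u) [L.Structure M] [Infinite M]
    (hOP : HasOrderProp L M) (lam : Cardinal.{u}) (hlam : L.card + ℵ₀ ≤ lam) :
    ∃ (N : (L.completeTheory M).ModelType) (A : Set N),
      #A = lam ∧
      lam < #{p : Set (Σ n : ℕ, L.Formula (Unit ⊕ Fin n) × (Fin n → N)) //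
        IsCompleteTypeOn Unit A p} := by
  classical
  obtain ⟨k, φ, a, ha⟩ := hOP
  have hlam0 : ℵ₀ ≤ lam := le_trans (self_le_add_left _ _) hlam
  have hk : 0 < k := by
    by_contra hk0
    push_neg at hk0
    have hkeq : k = 0 := by omega
    subst hkeq
    have he : (Sum.elim (a 0) (a 1) : Fin 0 ⊕ Fin 0 → M) = Sum.elim (a 1) (a 0) := by
      funext p; rcases p with i|i <;> exact i.elim0
    have h1 : φ.Realize (Sum.elim (a 0) (a 1)) := (ha 0 1).2 Nat.zero_lt_one
    rw [he] at h1
    exact absurd ((ha 1 0).1 h1) (by omega)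
  -- the least cardinal κ with lam < 2 ^ κ
  set Scard : Set Cardinal.{u} := {c | lam < 2 ^ c} with hScdef
  have hScne : Scard.Nonempty := ⟨lam, Cardinal.cantor lam⟩
  set κ := sInf Scard with hκdef
  have hκ : lam < 2 ^ κ := csInf_mem hScne
  have hκmin : ∀ μ, μ < κ → 2 ^ μ ≤ lam := by
    intro μ h
    by_contra hc
    push_neg at hc
    have hmem : μ ∈ Scard := hc
    exact absurd (csInf_le' hmem) (not_le.2 h)
  have hκlam : κ ≤ lam := csInf_le' (Cardinal.cantor lam)
  set ι := κ.ord.ToType with hιdef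
  have hι : #ι = κ := by rw [hιdef, Cardinal.mk_toType, Cardinal.card_ord]
  set J := Lex (ι → Fin 3) with hJdef
  -- the stretched order-indexed sequence
  obtain ⟨N, iN, nN, hNelem, b, hb⟩ := stretch (L := L) (N0 := M) J φ a ha
  letI := iN
  letI := nN
  -- nodes and branches of the binary tree inside J
  set node : ι → (ι → Bool) → J := fun γ₀ s =>
    toLex (fun γ => if γ < γ₀ then (if s γ then 2 else 0) else 1) with hnodedef
  set br : (ι → Bool) → J := fun η => toLex (fun γ => if η γ then 2 else 0) with hbrdef
  have hbrnode : ∀ (η : ι → Bool) (γ₀ : ι), η γ₀ = false → br η < node γ₀ η := by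
    intro η γ₀ h
    refine ⟨γ₀, fun β hβ => ?_, ?_⟩
    · show (if η β then 2 else 0 : Fin 3) = if β < γ₀ then (if η β then 2 else 0) else 1
      rw [if_pos hβ]
    · show (if η γ₀ then 2 else 0 : Fin 3) < if γ₀ < γ₀ then (if η γ₀ then 2 else 0) else 1
      rw [h, if_neg (lt_irrefl γ₀)]
      decide
  have hnodebr : ∀ (η η' : ι → Bool) (γ₀ : ι), (∀ β, β < γ₀ → η β = η' β) →
      η' γ₀ = true → node γ₀ η < br η' := by
    intro η η' γ₀ hag h
    refine ⟨γ₀, fun β hβ => ?_, ?_⟩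
    · show (if β < γ₀ then (if η β then 2 else 0 : Fin 3) else 1) = if η' β then 2 else 0
      rw [if_pos hβ, hag β hβ]
    · show (if γ₀ < γ₀ then (if η γ₀ then 2 else 0 : Fin 3) else 1) < if η' γ₀ then 2 else 0
      rw [if_neg (lt_irrefl γ₀), h]
      decide
  -- the small set of nodes
  set node' : (γ₀ : ι) → (↥(Set.Iio γ₀) → Bool) → J := fun γ₀ g =>
    node γ₀ (fun γ => if h : γ < γ₀ then g ⟨γ, h⟩ else false) with hnode'def
  set NodeSet : Set J := ⋃ γ₀ : ι, Set.range (node' γ₀) with hNSdef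
  have node_congr : ∀ (γ₀ : ι) (s s' : ι → Bool), (∀ γ, γ < γ₀ → s γ = s' γ) →
      node γ₀ s = node γ₀ s' := by
    intro γ₀ s s' hss
    simp only [hnodedef]
    congr 1
    funext γ
    by_cases h : γ < γ₀
    · rw [if_pos h, if_pos h, hss γ h]
    · rw [if_neg h, if_neg h]
  have node_mem : ∀ (γ₀ : ι) (s : ι → Bool), node γ₀ s ∈ NodeSet := by
    intro γ₀ s
    refine Set.mem_iUnion.2 ⟨γ₀, ⟨fun (x : ↥(Set.Iio γ₀)) => s x.1, ?_⟩⟩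
    simp only [hnode'def]
    apply node_congr
    intro γ h
    rw [dif_pos h]
  have hNScard : #NodeSet ≤ lam := by
    refine le_trans (Cardinal.mk_iUnion_le _) ?_
    have hsup : ⨆ γ₀ : ι, #(Set.range (node' γ₀)) ≤ lam := by
      refine ciSup_le' fun γ₀ => ?_
      refine le_trans Cardinal.mk_range_le ?_
      have h1 : #(↥(Set.Iio γ₀) → Bool) = 2 ^ #(Set.Iio γ₀) := by
        rw [Cardinal.mk_arrow]
        simp
      rw [h1]
      exact hκmin _ (Cardinal.mk_Iio_ord_toType γ₀)
    calc #ι * ⨆ γ₀ : ι, #(Set.range (node' γ₀)) ≤ lam * lam :=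
        mul_le_mul' (le_trans (le_of_eq hι) hκlam) hsup
      _ = lam := Cardinal.mul_eq_self hlam0
  -- the cut lemma: distinct branches are separated by a node
  have cut : ∀ η η' : ι → Bool, η ≠ η' → ∃ nd ∈ NodeSet,
      (br η < nd ∧ nd < br η') ∨ (br η' < nd ∧ nd < br η) := by
    intro η η' hne
    have hd : {γ : ι | η γ ≠ η' γ}.Nonempty := by
      by_contra hc
      rw [Set.not_nonempty_iff_eq_empty] at hc
      apply hne
      funext γ
      by_contra hg
      exact absurd (show γ ∈ {γ : ι | η γ ≠ η' γ} from hg)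
        (by rw [hc]; exact Set.notMem_empty γ)
    obtain ⟨γ₀, hγmem, hγmin⟩ :=
      (IsWellFounded.wf (r := ((· < ·) : ι → ι → Prop))).has_min _ hd
    have hag : ∀ β, β < γ₀ → η β = η' β := by
      intro β hβ
      by_contra hb2
      exact hγmin β hb2 hβ
    cases hv : η γ₀ with
    | false =>
      have hv' : η' γ₀ = true := by
        cases hv2 : η' γ₀ with
        | true => rfl
        | false => exact absurd (hv.trans hv2.symm) hγmem
      exact ⟨node γ₀ η, node_mem γ₀ η,
        Or.inl ⟨hbrnode η γ₀ hv, hnodebr η η' γ₀ hag hv'⟩⟩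
    | true =>
      have hv' : η' γ₀ = false := by
        cases hv2 : η' γ₀ with
        | false => rfl
        | true => exact absurd (hv.trans hv2.symm) hγmem
      exact ⟨node γ₀ η', node_mem γ₀ η',
        Or.inr ⟨hbrnode η' γ₀ hv', hnodebr η' η γ₀ (fun β h => (hag β h).symm) hv⟩⟩
  -- many branches
  have hJ2 : lam < #(ι → Bool) := by
    have h3 : #(ι → Bool) = 2 ^ κ := by
      rw [Cardinal.mk_arrow]
      simp [hι]
    rw [h3]
    exact hκ
  have hbrinj : Function.Injective br := by
    intro η η' h
    by_contra hne
    obtain ⟨nd, -, hor⟩ := cut η η' hne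
    rw [h] at hor
    rcases hor with ⟨h1, h2⟩|⟨h1, h2⟩ <;> exact absurd h2 (asymm h1)
  have hJcard : lam < #J := lt_of_lt_of_le hJ2 (Cardinal.mk_le_of_injective hbrinj)
  obtain ⟨W, hW⟩ := Cardinal.le_mk_iff_exists_set.1 (le_of_lt hJcard)
  set Ifull : Set J := NodeSet ∪ W with hIdef
  have hIcard : #Ifull ≤ lam := by
    refine le_trans (Cardinal.mk_union_le _ _) ?_
    rw [hW]
    exact le_trans (add_le_add hNScard le_rfl) (le_of_eq (Cardinal.add_eq_self hlam0))
  set A : Set N := ⋃ i ∈ Ifull, Set.range (b i) with hAdef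
  have hAup : #A ≤ lam := by
    refine le_trans (Cardinal.mk_biUnion_le _ _) ?_
    calc #Ifull * ⨆ i : Ifull, #(Set.range (b i.1))
        ≤ lam * lam := mul_le_mul' hIcard (ciSup_le' fun i =>
          le_of_lt (lt_of_lt_of_le (Set.finite_range _).lt_aleph0 hlam0))
      _ = lam := Cardinal.mul_eq_self hlam0
  have hbne' : ∀ i i' : J, i ≠ i' → b i ≠ b i' := by
    have hbne : ∀ i i' : J, i < i' → b i ≠ b i' := by
      intro i i' hlt he
      have h1 : φ.Realize (Sum.elim (b i) (b i')) := (hb i i').2 hlt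
      rw [he] at h1
      exact absurd ((hb i' i').1 h1) (lt_irrefl i')
    intro i i' hne
    rcases lt_or_gt_of_ne hne with h|h
    · exact hbne _ _ h
    · exact (hbne _ _ h).symm
  have hWb : ∀ i : J, i ∈ Ifull → ∀ v, b i v ∈ A := fun i hi v =>
    Set.mem_biUnion hi (Set.mem_range_self v)
  have hAlow : lam ≤ #A := by
    have hmapinj : Function.Injective (fun w : W =>
        (fun v => (⟨b w.1 v, hWb w.1 (Or.inr w.2) v⟩ : A) : Fin k → A)) := by
      intro w w' h
      apply Subtype.ext
      by_contra hne
      apply hbne' w.1 w'.1 hne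
      funext v
      exact congrArg Subtype.val (congrFun h v)
    have h1 : lam ≤ #(Fin k → A) := by
      rw [← hW]
      exact Cardinal.mk_le_of_injective hmapinj
    have h2 : #(Fin k → ↥A) = #↑A ^ (k : Cardinal.{u}) := by
      rw [Cardinal.mk_arrow]
      simp
    by_cases hfin : #↑A < ℵ₀
    · exfalso
      have h3 : #(Fin k → ↥A) < ℵ₀ := by
        rw [h2]
        exact Cardinal.power_lt_aleph0 hfin (Cardinal.nat_lt_aleph0 k)
      exact absurd (lt_of_le_of_lt (le_trans hlam0 h1) h3) (lt_irrefl _)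
    · push_neg at hfin
      refine le_trans h1 ?_
      rw [h2]
      exact Cardinal.pow_le hfin (Cardinal.nat_lt_aleph0 k)
  have hAcard : #A = lam := le_antisymm hAup hAlow
  -- branches give distinct types over A
  set t : (ι → Bool) → Fin k → N := fun η => b (br η) with htdef
  have tinj : Function.Injective (fun η => tpOf L A (t η)) := by
    intro η η' heq0
    have heq : tpOf L A (t η) = tpOf L A (t η') := heq0
    by_contra hne
    obtain ⟨nd, hndmem, hor⟩ := cut η η' hne
    have hndA : ∀ v, b nd v ∈ A := hWb nd (Or.inl hndmem)
    rcases hor with ⟨h1, h2⟩|⟨h1, h2⟩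
    · have hmem : (⟨k, (φ, b nd)⟩ : Σ n : ℕ, L.Formula (Fin k ⊕ Fin n) × (Fin n → N)) ∈
          tpOf L A (t η) := ⟨hndA, (hb (br η) nd).2 h1⟩
      rw [heq] at hmem
      exact absurd ((hb (br η') nd).1 hmem.2) (asymm h2)
    · have hmem : (⟨k, (φ, b nd)⟩ : Σ n : ℕ, L.Formula (Fin k ⊕ Fin n) × (Fin n → N)) ∈
          tpOf L A (t η') := ⟨hndA, (hb (br η') nd).2 h1⟩
      rw [← heq] at hmem
      exact absurd ((hb (br η) nd).1 hmem.2) (asymm h2)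
  have htypes : lam < #(Set.range (fun η => tpOf L A (t η))) := by
    rw [Cardinal.mk_range_eq _ tinj]
    exact hJ2
  obtain ⟨A', hA'card, hcount⟩ := count hlam0 hAcard hk t htypes
  haveI : N ⊨ L.completeTheory M :=
    (Theory.model_iff _).2 (fun ψ hψ => hNelem ψ (mem_completeTheory.1 hψ))
  exact ⟨Theory.ModelType.of _ N, A', hA'card, hcount⟩
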